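/- For every word w in X·({@} ∪ {λx : x ∈ X})* and every simple type τ: the word w has type τ under the word-typing rules if and only if the stack run of w is defined and equals argList(τ). -/

import Mathlib

/-- Simple types: τ ::= o | τ → τ. -/
inductive Ty : Type
  | o : Ty
  | arrow : Ty → Ty → Ty
deriving DecidableEq


/-- The alphabet `X^λ = X ∪ {@} ∪ {λx : x ∈ X}`. -/
inductive Letter (V : Type) : Type
  | var : V → Letter V
  | lam : V → Letter V
  | app : Letter V

/-- Word-typing rules on nonempty words over `X^λ`:
the one-letter word `x` has the type of `x`; if `u : τ` then `u·λx : σ → τ`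
where `σ` is the type of `x`; if `u : σ → τ` then `u·@ : τ`. -/
inductive WTy {V : Type} (tyOf : V → Ty) : List (Letter V) → Ty → Prop
  | var (x : V) : WTy tyOf [Letter.var x] (tyOf x)
  | lam {u : List (Letter V)} {τ : Ty} (x : V) :
      WTy tyOf u τ → WTy tyOf (u ++ [Letter.lam x]) (Ty.arrow (tyOf x) τ)
  | app {u : List (Letter V)} {σ τ : Ty} :
      WTy tyOf u (Ty.arrow σ τ) → WTy tyOf (u ++ [Letter.app]) τ

/-- The tail alphabet `{@} ∪ {λx : x ∈ X}`. -/
inductive TLetter (V : Type) : Type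
  | lam : V → TLetter V
  | app : TLetter V

/-- A word in `X·({@} ∪ {λx : x ∈ X})*`, encoded as its initial variable `x`
together with its tail `w`. -/
def toWord {V : Type} (x : V) (w : List (TLetter V)) : List (Letter V) :=
  Letter.var x :: w.map (fun l => match l with
    | TLetter.lam y => Letter.lam y
    | TLetter.app => Letter.app)

/-- `argList τ` is the list of argument types of `τ`:
`argList o = []` and `argList (σ → τ) = σ :: argList τ`. -/
def argList : Ty → List Ty
  | Ty.o => []
  | Ty.arrow σ τ => σ :: argList τ

/-- Process a word over `{@} ∪ {λx : x ∈ X}` on a stack of simple types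
(head = top): push the type of `x` on letter `λx`, pop the top element on
letter `@` (undefined if the stack is empty). -/
def runStack {V : Type} (tyOf : V → Ty) : List (TLetter V) → List Ty → Option (List Ty)
  | [], s => some s
  | TLetter.lam x :: w, s => runStack tyOf w (tyOf x :: s)
  | TLetter.app :: _, [] => none
  | TLetter.app :: w, _ :: s => runStack tyOf w s

private def mkTy : List Ty → Ty
  | [] => Ty.o
  | σ :: l => Ty.arrow σ (mkTy l)

private lemma mk_argList (τ : Ty) : mkTy (argList τ) = τ := by
  induction τ with
  | o => rfl
  | arrow σ τ ih1 ih2 => simp [argList, mkTy, ih2]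

private lemma argList_injective : Function.Injective argList := by
  intro a b h
  have := congrArg mkTy h
  rwa [mk_argList, mk_argList] at this

private lemma runStack_append {V : Type} (tyOf : V → Ty) (w₁ w₂ : List (TLetter V))
    (s : List Ty) :
    runStack tyOf (w₁ ++ w₂) s = (runStack tyOf w₁ s).bind (runStack tyOf w₂) := by
  induction w₁ generalizing s with
  | nil => simp [runStack]
  | cons t w ih =>
    cases t with
    | lam y => simp [runStack, ih]
    | app =>
      cases s with
      | nil => simp [runStack]
      | cons a s => simp [runStack, ih]


private lemma WTy_inv {V : Type} {tyOf : V → Ty} {l : List (Letter V)} {τ : Ty}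
    (h : WTy tyOf l τ) :
    (∃ x, l = [Letter.var x] ∧ τ = tyOf x) ∨
    (∃ u y τ', l = u ++ [Letter.lam y] ∧ τ = Ty.arrow (tyOf y) τ' ∧ WTy tyOf u τ') ∨
    (∃ u σ, l = u ++ [Letter.app] ∧ WTy tyOf u (Ty.arrow σ τ)) := by
  cases h with
  | var y => exact Or.inl ⟨y, rfl, rfl⟩
  | lam y h => exact Or.inr (Or.inl ⟨_, y, _, rfl, rfl, h⟩)
  | app h => exact Or.inr (Or.inr ⟨_, _, rfl, h⟩)

/-- A word `x·w` in `X·({@} ∪ {λx : x ∈ X})*` has type `τ` iff its stack run,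
started from `argList` of the type of `x`, is defined and equals `argList τ`. -/
theorem word_type_iff_stack_run {V : Type} [Fintype V] (tyOf : V → Ty)
    (x : V) (w : List (TLetter V)) (τ : Ty) :
    WTy tyOf (toWord x w) τ ↔ runStack tyOf w (argList (tyOf x)) = some (argList τ) := by
  induction w using List.reverseRecOn generalizing τ with
  | nil =>
    constructor
    · intro h
      rcases WTy_inv h with ⟨y, hy, rfl⟩ | ⟨u, y, τ', hl, _, _⟩ | ⟨u, σ, hl, _⟩
      · simp [toWord] at hy
        subst hy
        rfl
      · have := congrArg List.getLast? hl
        simp [toWord] at this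
      · have := congrArg List.getLast? hl
        simp [toWord] at this
    · intro h
      have : argList (tyOf x) = argList τ := by simpa [runStack] using h
      have := argList_injective this
      subst this
      exact WTy.var x
  | append_singleton w t ih =>
    have hword : toWord x (w ++ [t]) = toWord x w ++
        [(match t with | TLetter.lam y => Letter.lam y | TLetter.app => Letter.app)] := by
      simp [toWord]
    constructor
    · intro h
      rw [hword] at h
      cases t with
      | lam y =>
        rcases WTy_inv h with ⟨z, hz, rfl⟩ | ⟨u, z, τ', hl, rfl, hu⟩ | ⟨u, σ, hl, _⟩
        · have := congrArg List.length hz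
          simp [toWord] at this
        · have h2 : u = toWord x w ∧ z = y := by
            have h3 := congrArg List.dropLast hl
            have h4 := congrArg List.getLast? hl
            simp at h3 h4
            exact ⟨h3.symm, h4.symm⟩
          obtain ⟨rfl, rfl⟩ := h2
          rw [runStack_append, (ih _).mp hu]
          simp [runStack, argList]
        · have := congrArg List.getLast? hl
          simp at this
      | app =>
        rcases WTy_inv h with ⟨z, hz, rfl⟩ | ⟨u, z, τ', hl, rfl, hu⟩ | ⟨u, σ, hl, hu⟩
        · have := congrArg List.length hz
          simp [toWord] at this
        · have := congrArg List.getLast? hl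
          simp at this
        · have h2 : u = toWord x w := by
            have h3 := congrArg List.dropLast hl
            simp at h3; exact h3.symm
          subst h2
          rw [runStack_append, (ih _).mp hu]
          simp [runStack, argList]
    · intro h
      rw [hword]
      rw [runStack_append] at h
      obtain ⟨s, hs, h2⟩ := Option.bind_eq_some_iff.mp h
      cases t with
      | lam y =>
        have h3 : tyOf y :: s = argList τ := by
          simpa [runStack] using h2
        cases τ with
        | o => simp [argList] at h3
        | arrow σ τ' =>
          simp [argList] at h3
          obtain ⟨rfl, rfl⟩ := h3
          exact WTy.lam y ((ih _).mpr hs)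
      | app =>
        cases s with
        | nil => simp [runStack] at h2
        | cons a s =>
          simp [runStack] at h2
          subst h2
          exact WTy.app ((ih _).mpr (show runStack tyOf w _ = some (argList (Ty.arrow a τ)) from hs))
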